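/- Let T be an injective unilateral weighted shift on H^2(β) (realized as multiplication by z) with spectral radius r(T) ≠ 0. Then the commutant algebra {T}' contains no nonzero quasi-nilpotent operator. -/

import Mathlib

open Finset Filter ENNReal

local notation "⟪" x ", " y "⟫" => @inner ℂ _ _ x y

lemma aux_norm_sum_sq {H : Type*} [NormedAddCommGroup H] [InnerProductSpace ℂ H]
    {ι : Type*} {v : ι → H} (hv : Orthonormal ℂ v) (s : Finset ι) (c : ι → ℂ) :
    ‖∑ i ∈ s, c i • v i‖ ^ 2 = ∑ i ∈ s, ‖c i‖ ^ 2 := by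
  rw [@norm_sq_eq_re_inner ℂ, hv.inner_sum, map_sum]
  refine Finset.sum_congr rfl fun i _ => ?_
  rw [mul_comm, Complex.mul_conj]
  set_option maxRecDepth 4000 in
  simp [Complex.normSq_eq_norm_sq, ← Complex.ofReal_pow]

/-- An operator is quasi-nilpotent if `‖P^n‖^{1/n} → 0` (spectral radius zero). -/
def QuasiNilpotent {H : Type*} [NormedAddCommGroup H] [NormedSpace ℂ H]
    (P : H →L[ℂ] H) : Prop :=
  Filter.Tendsto (fun n : ℕ => ‖P ^ n‖ ^ ((n : ℝ)⁻¹)) Filter.atTop (nhds 0)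

set_option maxHeartbeats 1000000 in
/-- Let `T` be an injective unilateral (forward) weighted shift with nonzero
weights and spectral radius `r(T) ≠ 0`. Then the commutant of `T` contains no nonzero
quasi-nilpotent operator. -/
theorem stmt5 {H : Type*} [NormedAddCommGroup H] [InnerProductSpace ℂ H] [CompleteSpace H]
    (e : ℕ → H) (he : Orthonormal ℂ e)
    (hdense : (Submodule.span ℂ (Set.range e)).topologicalClosure = ⊤)
    (w : ℕ → ℂ) (hw : ∀ n, w n ≠ 0)
    (T : H →L[ℂ] H) (hT : ∀ n, T (e n) = w n • e (n + 1))
    (hr : spectralRadius ℂ T ≠ 0)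
    (X : H →L[ℂ] H) (hcomm : T * X = X * T) (hq : QuasiNilpotent X) :
    X = 0 := by
  classical
  have hq' : Filter.Tendsto (fun n : ℕ => ‖X ^ n‖ ^ ((n : ℝ)⁻¹)) Filter.atTop (nhds 0) := hq
  haveI : Nontrivial H := ⟨⟨e 0, 0, he.ne_zero 0⟩⟩
  have hd : Dense ((Submodule.span ℂ (Set.range e) : Submodule ℂ H) : Set H) :=
    Submodule.dense_iff_topologicalClosure_eq_top.mpr hdense
  set B : ℕ → ℂ := fun n => ∏ i ∈ Finset.range n, w i with hBdef
  have hB : ∀ n, B n ≠ 0 := fun n => Finset.prod_ne_zero_iff.mpr fun i _ => hw i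
  have hB0 : B 0 = 1 := by simp [hBdef]
  have hBsucc : ∀ n, B (n + 1) = B n * w n := fun n => Finset.prod_range_succ _ _
  have hite : ∀ i j : ℕ, ⟪e i, e j⟫ = if i = j then 1 else 0 := by
    intro i j; exact orthonormal_iff_ite.mp he i j
  -- Lemma A : action of powers of the shift on the basis
  have hA : ∀ (N i : ℕ), (T ^ N) (e i) = (B (i + N) / B i) • e (i + N) := by
    intro N
    induction N with
    | zero => intro i; simp [div_self (hB i)]
    | succ N ihA =>
      intro i
      have h1 : (T ^ (N + 1)) (e i) = (T ^ N) (T (e i)) := by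
        rw [pow_succ]; rfl
      rw [h1, hT i, map_smul, ihA (i + 1), smul_smul]
      rw [show i + 1 + N = i + (N + 1) by omega, hBsucc i]
      congr 1
      field_simp [hB, hw]
  -- commutation with powers
  have hcommpow : ∀ (K : ℕ) (y : H), X ((T ^ K) y) = (T ^ K) (X y) := by
    intro K
    induction K with
    | zero => intro y; simp
    | succ K ihK =>
      intro y
      have h1 : (T ^ (K + 1)) y = (T ^ K) (T y) := by rw [pow_succ]; rfl
      have h2 : (T ^ (K + 1)) (X y) = (T ^ K) (T (X y)) := by rw [pow_succ]; rfl
      have h3 : T (X y) = X (T y) := congrArg (fun f : H →L[ℂ] H => f y) hcomm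
      rw [h1, h2, h3, ihK (T y)]
  -- Lemma B : coefficient extraction through powers of T
  have hBle : ∀ (k j : ℕ), k ≤ j → ∀ y : H,
      ⟪e j, (T ^ k) y⟫ = (B j / B (j - k)) * ⟪e (j - k), y⟫ := by
    intro k j hkj y
    have key : (innerSL ℂ (e j)).comp (T ^ k) = (B j / B (j - k)) • innerSL ℂ (e (j - k)) := by
      refine ContinuousLinearMap.ext_on hd ?_
      rintro _ ⟨i, rfl⟩
      simp only [ContinuousLinearMap.comp_apply, ContinuousLinearMap.smul_apply, innerSL_apply_apply,
        hA k i, inner_smul_right, hite]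
      by_cases hji : j = i + k
      · have h2 : j - k = i := by omega
        simp [hji, h2]
      · have h2 : ¬ (j - k = i) := by omega
        simp [hji, h2]
    have := congrArg (fun f : H →L[ℂ] ℂ => f y) key
    simpa using this
  have hBlt : ∀ (k j : ℕ), j < k → ∀ y : H, ⟪e j, (T ^ k) y⟫ = 0 := by
    intro k j hjk y
    have key : (innerSL ℂ (e j)).comp (T ^ k) = 0 := by
      refine ContinuousLinearMap.ext_on hd ?_
      rintro _ ⟨i, rfl⟩
      simp only [ContinuousLinearMap.comp_apply, ContinuousLinearMap.zero_apply, innerSL_apply_apply,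
        hA k i, inner_smul_right, hite]
      have h2 : ¬ (j = i + k) := by omega
      simp [h2]
    have := congrArg (fun f : H →L[ℂ] ℂ => f y) key
    simpa using this
  set c : ℕ → ℂ := fun i => ⟪e i, X (e 0)⟫ with hcdef
  -- Lemma F : matrix entries of X
  have hF : ∀ N K : ℕ, ⟪e N, X (e K)⟫ =
      if K ≤ N then (B N / (B K * B (N - K))) * c (N - K) else 0 := by
    intro N K
    have h1 : (T ^ K) (e 0) = B K • e K := by simpa [hB0] using hA K 0
    have h2 : e K = (B K)⁻¹ • (T ^ K) (e 0) := by
      rw [h1, smul_smul, inv_mul_cancel₀ (hB K), one_smul]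
    have h3 : X (e K) = (B K)⁻¹ • (T ^ K) (X (e 0)) := by
      rw [h2, map_smul, hcommpow]
    by_cases hKN : K ≤ N
    · rw [if_pos hKN, h3, inner_smul_right, hBle K N hKN]
      field_simp
      rfl
    · rw [if_neg hKN, h3, inner_smul_right, hBlt K N (by omega)]
      simp
  -- Lemma E : finite expansion of ⟪e N, X y⟫
  have hE : ∀ (N : ℕ) (y : H), ⟪e N, X y⟫ =
      ∑ k ∈ Finset.range (N + 1), ⟪e k, y⟫ * ⟪e N, X (e k)⟫ := by
    have htri : ∀ N i : ℕ, N < i → ⟪e N, X (e i)⟫ = 0 := by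
      intro N i hNi
      rw [hF N i, if_neg (by omega)]
    intro N y
    have key : (innerSL ℂ (e N)).comp X =
        ∑ k ∈ Finset.range (N + 1), (⟪e N, X (e k)⟫) • innerSL ℂ (e k) := by
      refine ContinuousLinearMap.ext_on hd ?_
      rintro _ ⟨i, rfl⟩
      simp only [ContinuousLinearMap.comp_apply, ContinuousLinearMap.sum_apply,
        ContinuousLinearMap.smul_apply, innerSL_apply_apply, hite, smul_eq_mul, mul_ite, mul_one,
        mul_zero]
      rw [Finset.sum_ite_eq' (Finset.range (N + 1)) i fun k => ⟪e N, X (e k)⟫]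
      by_cases hiN : i ∈ Finset.range (N + 1)
      · simp [hiN]
      · have hlt : N < i := by simp at hiN; omega
        simp [hiN, htri N i hlt]
    have := congrArg (fun f : H →L[ℂ] ℂ => f y) key
    simp only [ContinuousLinearMap.comp_apply, ContinuousLinearMap.sum_apply,
      ContinuousLinearMap.smul_apply, innerSL_apply_apply, smul_eq_mul] at this
    rw [this]
    exact Finset.sum_congr rfl fun k _ => mul_comm _ _
  -- Lemma C : operator norm of powers of T from basis action
  have hC : ∀ (M : ℕ) (s : ℝ), 0 ≤ s → (∀ k, ‖B (k + M) / B k‖ ≤ s) → ‖T ^ M‖ ≤ s := by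
    intro M s hs hk
    refine ContinuousLinearMap.opNorm_le_bound _ hs ?_
    intro x
    have hset : ∀ x ∈ (Submodule.span ℂ (Set.range e) : Submodule ℂ H),
        ‖(T ^ M) x‖ ≤ s * ‖x‖ := by
      intro x hx
      obtain ⟨l, rfl⟩ := Finsupp.mem_span_range_iff_exists_finsupp.mp hx
      have hrepr : (l.sum fun i a => a • e i) = ∑ i ∈ l.support, l i • e i := rfl
      rw [hrepr]
      have hTx : (T ^ M) (∑ i ∈ l.support, l i • e i)
          = ∑ i ∈ l.support, (l i * (B (i + M) / B i)) • e (i + M) := by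
        rw [map_sum]
        refine Finset.sum_congr rfl fun i _ => ?_
        rw [map_smul, hA M i, smul_smul]
      rw [hTx]
      have hon2 : Orthonormal ℂ (fun i : ℕ => e (i + M)) :=
        he.comp _ (fun a b hab => by omega)
      have h1 : ‖∑ i ∈ l.support, (l i * (B (i + M) / B i)) • e (i + M)‖ ^ 2
          = ∑ i ∈ l.support, ‖l i * (B (i + M) / B i)‖ ^ 2 :=
        aux_norm_sum_sq hon2 l.support _
      have h2 : ‖∑ i ∈ l.support, l i • e i‖ ^ 2 = ∑ i ∈ l.support, ‖l i‖ ^ 2 :=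
        aux_norm_sum_sq he l.support _
      have hle : ∑ i ∈ l.support, ‖l i * (B (i + M) / B i)‖ ^ 2
          ≤ s ^ 2 * ∑ i ∈ l.support, ‖l i‖ ^ 2 := by
        rw [Finset.mul_sum]
        refine Finset.sum_le_sum fun i _ => ?_
        rw [norm_mul, mul_pow]
        have hr2 : ‖B (i + M) / B i‖ ^ 2 ≤ s ^ 2 := by
          have := hk i
          nlinarith [norm_nonneg (B (i + M) / B i)]
        nlinarith [sq_nonneg ‖l i‖]
      have hA2 : ‖∑ i ∈ l.support, (l i * (B (i + M) / B i)) • e (i + M)‖ ^ 2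
          ≤ (s * ‖∑ i ∈ l.support, l i • e i‖) ^ 2 := by
        rw [h1, mul_pow, h2]; exact hle
      have hna := norm_nonneg (∑ i ∈ l.support, (l i * (B (i + M) / B i)) • e (i + M))
      have hnb : 0 ≤ s * ‖∑ i ∈ l.support, l i • e i‖ := by positivity
      nlinarith
    have hclosed : IsClosed {x : H | ‖(T ^ M) x‖ ≤ s * ‖x‖} := by
      apply isClosed_le
      · exact (continuous_norm.comp (T ^ M).continuous)
      · exact continuous_const.mul continuous_norm
    have hdsub : closure ((Submodule.span ℂ (Set.range e) : Submodule ℂ H) : Set H)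
        ⊆ {x : H | ‖(T ^ M) x‖ ≤ s * ‖x‖} :=
      closure_minimal (fun x hx => hset x hx) hclosed
    exact hdsub (by rw [hd.closure_eq]; trivial)
  -- spectral radius lower bound
  set ρ : ℝ := (spectralRadius ℂ T).toReal with hρdef
  have hfin : spectralRadius ℂ T ≠ ⊤ :=
    (lt_of_le_of_lt (spectrum.spectralRadius_le_nnnorm (𝕜 := ℂ) T) ENNReal.coe_lt_top).ne
  have hρpos : 0 < ρ := ENNReal.toReal_pos hr hfin
  have hρpow : ∀ M : ℕ, 1 ≤ M → ρ ^ M ≤ ‖T ^ M‖ := by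
    intro M hM
    obtain ⟨n, rfl⟩ : ∃ n, M = n + 1 := ⟨M - 1, by omega⟩
    have h := spectrum.spectralRadius_le_pow_nnnorm_pow_one_div ℂ T n
    rw [nnnorm_one, ENNReal.coe_one, ENNReal.one_rpow, mul_one] at h
    have h2 : spectralRadius ℂ T ^ ((n : ℝ) + 1) ≤ (‖T ^ (n + 1)‖₊ : ℝ≥0∞) := by
      calc spectralRadius ℂ T ^ ((n : ℝ) + 1)
          ≤ ((‖T ^ (n + 1)‖₊ : ℝ≥0∞) ^ (1 / ((n : ℝ) + 1))) ^ ((n : ℝ) + 1) :=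
            ENNReal.rpow_le_rpow h (by positivity)
        _ = (‖T ^ (n + 1)‖₊ : ℝ≥0∞) := by
            rw [← ENNReal.rpow_mul, one_div, inv_mul_cancel₀ (by positivity), ENNReal.rpow_one]
    have h3 := ENNReal.toReal_mono (by exact ENNReal.coe_ne_top) h2
    rw [← ENNReal.toReal_rpow, ENNReal.coe_toReal, coe_nnnorm] at h3
    have h4 : (spectralRadius ℂ T).toReal ^ ((((n + 1) : ℕ)) : ℝ) ≤ ‖T ^ (n + 1)‖ := by
      convert h3 using 2
      push_cast
      ring
    rwa [Real.rpow_natCast] at h4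
  -- existence of a good column for every power
  have hex : ∀ M : ℕ, ∃ k, (ρ / 2) ^ M ≤ ‖B (k + M) / B k‖ := by
    intro M
    rcases Nat.eq_zero_or_pos M with hM | hM
    · refine ⟨0, ?_⟩
      simp [hM, div_self (hB 0)]
    · by_contra hcon
      push_neg at hcon
      have hle : ‖T ^ M‖ ≤ (ρ / 2) ^ M :=
        hC M _ (by positivity) fun k => (hcon k).le
      have hlt : (ρ / 2) ^ M < ρ ^ M :=
        pow_lt_pow_left₀ (by linarith) (by positivity) (by omega)
      have := hρpow M hM
      linarith
  -- main induction : all the coefficients of X vanish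
  have hc : ∀ n, c n = 0 := by
    intro n
    induction n using Nat.strong_induction_on with
    | _ n ih =>
      -- the key computation of the diagonal coefficients of powers of X
      have hR : ∀ (m k N : ℕ), N ≤ k + m * n → ⟪e N, (X ^ m) (e k)⟫ =
          if N = k + m * n then (B N / B k) * (c n / B n) ^ m else 0 := by
        intro m
        induction m with
        | zero =>
          intro k N hN
          simp only [pow_zero, ContinuousLinearMap.one_apply, hite, Nat.zero_mul, Nat.add_zero]
          by_cases h : N = k
          · simp [h, div_self (hB k)]
          · simp [h]
        | succ m ihm =>
          intro k N hN
          have hmn : k + (m + 1) * n = k + m * n + n := by ring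
          rw [hmn] at hN ⊢
          have hXsucc : (X ^ (m + 1)) (e k) = X ((X ^ m) (e k)) := by
            rw [pow_succ']; rfl
          rw [hXsucc, hE N ((X ^ m) (e k))]
          by_cases hNeq : N = k + m * n + n
          · have hmem : k + m * n ∈ Finset.range (N + 1) := by
              simp only [Finset.mem_range]; omega
            rw [Finset.sum_eq_single_of_mem (k + m * n) hmem ?side]
            · rw [ihm k (k + m * n) le_rfl, if_pos rfl, hF N (k + m * n),
                if_pos (by omega : k + m * n ≤ N)]
              have hsub : N - (k + m * n) = n := by omega
              rw [hsub, if_pos hNeq]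
              field_simp [hB]
              rw [pow_succ, mul_comm ((c n / B n) ^ m), ← mul_assoc, mul_div_cancel₀ (c n) (hB n)]
            · intro j hj hjne
              by_cases hjle : j ≤ k + m * n
              · rw [ihm k j (by omega), if_neg (by omega)]
                ring
              · rw [hF N j]
                by_cases hjN : j ≤ N
                · have : c (N - j) = 0 := ih _ (by omega)
                  rw [if_pos hjN, this]
                  ring
                · rw [if_neg hjN]; ring
          · rw [if_neg hNeq]
            refine Finset.sum_eq_zero fun j hj => ?_
            rw [Finset.mem_range] at hj
            by_cases hjle : j ≤ k + m * n
            · by_cases hjeq : j = k + m * n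
              · rw [hF N j]
                by_cases hjN : j ≤ N
                · have : c (N - j) = 0 := ih _ (by omega)
                  rw [if_pos hjN, this]; ring
                · rw [if_neg hjN]; ring
              · rw [ihm k j (by omega), if_neg hjeq]; ring
            · rw [hF N j]
              by_cases hjN : j ≤ N
              · have : c (N - j) = 0 := ih _ (by omega)
                rw [if_pos hjN, this]; ring
              · rw [if_neg hjN]; ring
      -- the quantitative bound and the limit argument
      set a : ℝ := (ρ / 2) ^ n * ‖c n / B n‖ with ha
      have hanonneg : 0 ≤ a := by positivity
      have hbound : ∀ m : ℕ, a ^ m ≤ ‖X ^ m‖ := by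
        intro m
        obtain ⟨k, hk⟩ := hex (m * n)
        have h1 := hR m k (k + m * n) le_rfl
        rw [if_pos rfl] at h1
        have h2 : ‖⟪e (k + m * n), (X ^ m) (e k)⟫‖ ≤ ‖X ^ m‖ := by
          calc ‖⟪e (k + m * n), (X ^ m) (e k)⟫‖ ≤ ‖e (k + m * n)‖ * ‖(X ^ m) (e k)‖ :=
                norm_inner_le_norm _ _
            _ ≤ 1 * (‖X ^ m‖ * ‖e k‖) := by
                rw [he.1]
                exact mul_le_mul_of_nonneg_left ((X ^ m).le_opNorm _) zero_le_one
            _ = ‖X ^ m‖ := by rw [he.1, one_mul, mul_one]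
        rw [h1, norm_mul, norm_pow] at h2
        calc a ^ m = (ρ / 2) ^ (n * m) * ‖c n / B n‖ ^ m := by
              rw [ha, mul_pow, ← pow_mul]
          _ ≤ ‖B (k + m * n) / B k‖ * ‖c n / B n‖ ^ m := by
              apply mul_le_mul_of_nonneg_right _ (by positivity)
              rw [show n * m = m * n by ring]
              exact hk
          _ ≤ ‖X ^ m‖ := h2
      have hle : ∀ᶠ m : ℕ in atTop, a ≤ ‖X ^ m‖ ^ ((m : ℝ)⁻¹) := by
        filter_upwards [Filter.eventually_ge_atTop 1] with m hm
        have h1 : a ^ m ≤ ‖X ^ m‖ := hbound m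
        have h2 : (a ^ m : ℝ) ^ ((m : ℝ)⁻¹) ≤ ‖X ^ m‖ ^ ((m : ℝ)⁻¹) :=
          Real.rpow_le_rpow (by positivity) h1 (by positivity)
        calc a = (a ^ m) ^ ((m : ℝ)⁻¹) := by
              rw [← Real.rpow_natCast a m, ← Real.rpow_mul hanonneg]
              rw [mul_inv_cancel₀ (by positivity), Real.rpow_one]
          _ ≤ _ := h2
      have hfin2 : a ≤ 0 := ge_of_tendsto hq' hle
      have haz : a = 0 := le_antisymm hfin2 hanonneg
      have hnz : ‖c n / B n‖ = 0 := by
        by_contra hne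
        have : 0 < a := by
          rw [ha]
          have : 0 < ‖c n / B n‖ := lt_of_le_of_ne (norm_nonneg _) (Ne.symm hne)
          positivity
        linarith
      have h5 : c n / B n = 0 := norm_eq_zero.mp hnz
      exact (div_eq_zero_iff.mp h5).resolve_right (hB n)
  -- conclude : X vanishes on e 0, hence everywhere
  have hXe0 : X (e 0) = 0 := by
    have key : innerSL ℂ (X (e 0)) = 0 := by
      refine ContinuousLinearMap.ext_on hd ?_
      rintro _ ⟨i, rfl⟩
      simp only [innerSL_apply_apply, ContinuousLinearMap.zero_apply]
      rw [← inner_conj_symm]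
      have : ⟪e i, X (e 0)⟫ = 0 := hc i
      rw [this, map_zero]
    have h2 : ⟪X (e 0), X (e 0)⟫ = 0 := by
      have := congrArg (fun f : H →L[ℂ] ℂ => f (X (e 0))) key
      simpa using this
    exact inner_self_eq_zero.mp h2
  refine ContinuousLinearMap.ext_on hd ?_
  rintro _ ⟨K, rfl⟩
  have h1 : (T ^ K) (e 0) = B K • e K := by simpa [hB0] using hA K 0
  have h2 : e K = (B K)⁻¹ • (T ^ K) (e 0) := by
    rw [h1, smul_smul, inv_mul_cancel₀ (hB K), one_smul]
  show X (e K) = (0 : H →L[ℂ] H) (e K)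
  rw [ContinuousLinearMap.zero_apply, h2, map_smul, hcommpow, hXe0, map_zero, smul_zero]
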